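/- Let Ω = [a₁,b₁]×[a₂,b₂] ⊂ ℝ² be a closed rectangle with a₁<b₁, a₂<b₂, let γ>1 and Δt ∈ ℝ. Let pⁿ, pⁿ⁺¹, ρⁿ, kⁿ, hⁿ : Ω → ℝ be continuous, ρⁿ⁺¹ : Ω → ℝ continuous and everywhere positive, wⁿ⁺¹, wⁿ, w*, qⁿ : Ω → ℝ² and τ*u* : Ω → ℝ² continuous, and suppose the three vector fields hⁿ∇pⁿ⁺¹, hⁿw*, and kⁿwⁿ + qⁿ − τ*u* are continuous on Ω and differentiable on its interior with continuous (integrable) divergences. Assume the pointwise semi-discrete pressure equation holds on Ω: pⁿ⁺¹/(γ−1) − Δt² div(hⁿ∇pⁿ⁺¹) = pⁿ/(γ−1) + p* − |wⁿ⁺¹|²/(2ρⁿ⁺¹) − Δt div(hⁿw*), where p* = ρⁿkⁿ − Δt div(kⁿwⁿ + qⁿ − τ*u*). Assume moreover the impermeability conditions: the normal components of hⁿ∇pⁿ⁺¹, hⁿw*, and kⁿwⁿ + qⁿ − τ*u* all vanish on the boundary ∂Ω. Then the total energy is globally conserved: ∫_Ω ( pⁿ⁺¹/(γ−1) + |wⁿ⁺¹|²/(2ρⁿ⁺¹)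 ) dV = ∫_Ω ( pⁿ/(γ−1) + ρⁿkⁿ ) dV. -/

import Mathlib

open MeasureTheory

/-- Divergence of a planar vector field, computed from the Fréchet derivatives of
its two components. -/
noncomputable def pdiv (F : ℝ × ℝ → ℝ × ℝ) (x : ℝ × ℝ) : ℝ :=
  fderiv ℝ (fun y => (F y).1) x (1, 0) + fderiv ℝ (fun y => (F y).2) x (0, 1)

/-- Gradient of a planar scalar field. -/
noncomputable def pgrad (f : ℝ × ℝ → ℝ) (x : ℝ × ℝ) : ℝ × ℝ :=
  (fderiv ℝ f x (1, 0), fderiv ℝ f x (0, 1))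

section DivZero
open Set

lemma div_integral_zero (a₁ b₁ a₂ b₂ : ℝ) (ha : a₁ ≤ b₁) (hb : a₂ ≤ b₂)
    (F : ℝ × ℝ → ℝ × ℝ)
    (hFc : ContinuousOn F (Icc (a₁, a₂) (b₁, b₂)))
    (hFd : ∀ x ∈ interior (Icc ((a₁ : ℝ), a₂) (b₁, b₂)), DifferentiableAt ℝ F x)
    (hFi : IntegrableOn (pdiv F) (Icc (a₁, a₂) (b₁, b₂)))
    (h1 : ∀ x ∈ Icc ((a₁ : ℝ), a₂) (b₁, b₂), (x.1 = a₁ ∨ x.1 = b₁) → (F x).1 = 0)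
    (h2 : ∀ x ∈ Icc ((a₁ : ℝ), a₂) (b₁, b₂), (x.2 = a₂ ∨ x.2 = b₂) → (F x).2 = 0) :
    ∫ x in Icc ((a₁ : ℝ), a₂) (b₁, b₂), pdiv F x = 0 := by
  have hle : ((a₁ : ℝ), a₂) ≤ (b₁, b₂) := ⟨ha, hb⟩
  have hint : interior (Icc ((a₁ : ℝ), a₂) (b₁, b₂)) = Ioo a₁ b₁ ×ˢ Ioo a₂ b₂ := by
    rw [Icc_prod_eq, interior_prod_eq, interior_Icc, interior_Icc]
  have key := integral_divergence_prod_Icc_of_hasFDerivAt_off_countable_of_le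
    (fun y => (F y).1) (fun y => (F y).2)
    (fun x => fderiv ℝ (fun y => (F y).1) x) (fun x => fderiv ℝ (fun y => (F y).2) x)
    ((a₁ : ℝ), a₂) (b₁, b₂) hle ∅ countable_empty
    (hFc.fst) (hFc.snd)
    (fun x hx => by
      have hx' : x ∈ interior (Icc ((a₁ : ℝ), a₂) (b₁, b₂)) := by
        rw [hint]; exact hx.1
      exact ((hFd x hx').fst).hasFDerivAt)
    (fun x hx => by
      have hx' : x ∈ interior (Icc ((a₁ : ℝ), a₂) (b₁, b₂)) := by
        rw [hint]; exact hx.1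
      exact ((hFd x hx').snd).hasFDerivAt)
    hFi
  have e1 : (∫ x in a₁..b₁, (F (x, b₂)).2) = 0 := by
    rw [intervalIntegral.integral_congr (g := fun _ => (0:ℝ))]
    · simp
    · intro x hx
      rw [uIcc_of_le ha] at hx
      exact h2 (x, b₂) ⟨⟨hx.1, hb⟩, ⟨hx.2, le_refl _⟩⟩ (Or.inr rfl)
  have e2 : (∫ x in a₁..b₁, (F (x, a₂)).2) = 0 := by
    rw [intervalIntegral.integral_congr (g := fun _ => (0:ℝ))]
    · simp
    · intro x hx
      rw [uIcc_of_le ha] at hx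
      exact h2 (x, a₂) ⟨⟨hx.1, le_refl _⟩, ⟨hx.2, hb⟩⟩ (Or.inl rfl)
  have e3 : (∫ y in a₂..b₂, (F (b₁, y)).1) = 0 := by
    rw [intervalIntegral.integral_congr (g := fun _ => (0:ℝ))]
    · simp
    · intro y hy
      rw [uIcc_of_le hb] at hy
      exact h1 (b₁, y) ⟨⟨ha, hy.1⟩, ⟨le_refl _, hy.2⟩⟩ (Or.inr rfl)
  have e4 : (∫ y in a₂..b₂, (F (a₁, y)).1) = 0 := by
    rw [intervalIntegral.integral_congr (g := fun _ => (0:ℝ))]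
    · simp
    · intro y hy
      rw [uIcc_of_le hb] at hy
      exact h1 (a₁, y) ⟨⟨le_refl _, hy.1⟩, ⟨ha, hy.2⟩⟩ (Or.inl rfl)
  rw [e1, e2, e3, e4] at key
  simpa [pdiv] using key

end DivZero

/-- Global conservation of the total energy for the semi-implicit scheme: if the
semi-discrete pressure equation holds pointwise on the closed rectangle `Ω` and the
normal components of the flux fields `hⁿ∇pⁿ⁺¹`, `hⁿw*`, `kⁿwⁿ + qⁿ − τ*u*` vanish
on `∂Ω`, then `∫_Ω (pⁿ⁺¹/(γ−1) + |wⁿ⁺¹|²/(2ρⁿ⁺¹)) = ∫_Ω (pⁿ/(γ−1) + ρⁿkⁿ)`. -/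


theorem global_energy_conservation
    (a₁ b₁ a₂ b₂ : ℝ) (ha : a₁ < b₁) (hb : a₂ < b₂)
    (Ω : Set (ℝ × ℝ)) (hΩ : Ω = Set.Icc (a₁, a₂) (b₁, b₂))
    (γ Δt : ℝ) (hγ : 1 < γ)
    (pn pn1 ρn kn hn ρn1 : ℝ × ℝ → ℝ)
    (wn1 wn wstar qn τu : ℝ × ℝ → ℝ × ℝ)
    -- continuity of the scalar fields
    (hpn : ContinuousOn pn Ω) (hpn1 : ContinuousOn pn1 Ω)
    (hρn : ContinuousOn ρn Ω) (hkn : ContinuousOn kn Ω) (hhn : ContinuousOn hn Ω)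
    (hρn1 : ContinuousOn ρn1 Ω) (hρn1pos : ∀ x ∈ Ω, 0 < ρn1 x)
    -- continuity of the vector fields
    (hwn1 : ContinuousOn wn1 Ω) (hwn : ContinuousOn wn Ω)
    (hwstar : ContinuousOn wstar Ω) (hqn : ContinuousOn qn Ω)
    (hτu : ContinuousOn τu Ω)
    -- the three flux fields
    (A B Cf : ℝ × ℝ → ℝ × ℝ)
    (hA : A = fun x => hn x • pgrad pn1 x)
    (hB : B = fun x => hn x • wstar x)
    (hC : Cf = fun x => kn x • wn x + qn x - τu x)
    -- continuity on Ω, differentiability on the interior, continuous integrable divergences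
    (hAc : ContinuousOn A Ω) (hBc : ContinuousOn B Ω) (hCc : ContinuousOn Cf Ω)
    (hAd : ∀ x ∈ interior Ω, DifferentiableAt ℝ A x)
    (hBd : ∀ x ∈ interior Ω, DifferentiableAt ℝ B x)
    (hCd : ∀ x ∈ interior Ω, DifferentiableAt ℝ Cf x)
    (hAdivc : ContinuousOn (pdiv A) (interior Ω))
    (hBdivc : ContinuousOn (pdiv B) (interior Ω))
    (hCdivc : ContinuousOn (pdiv Cf) (interior Ω))
    (hAdiv : IntegrableOn (pdiv A) Ω)
    (hBdiv : IntegrableOn (pdiv B) Ω)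
    (hCdiv : IntegrableOn (pdiv Cf) Ω)
    -- the pointwise semi-discrete pressure equation, with
    -- p* = ρⁿkⁿ − Δt div(kⁿwⁿ + qⁿ − τ*u*)
    (heq : ∀ x ∈ Ω,
      pn1 x / (γ - 1) - Δt ^ 2 * pdiv A x =
        pn x / (γ - 1) + (ρn x * kn x - Δt * pdiv Cf x)
          - ((wn1 x).1 ^ 2 + (wn1 x).2 ^ 2) / (2 * ρn1 x)
          - Δt * pdiv B x)
    -- impermeability: vanishing normal components on the boundary of the rectangle
    (hAbc1 : ∀ x ∈ Ω, (x.1 = a₁ ∨ x.1 = b₁) → (A x).1 = 0)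
    (hAbc2 : ∀ x ∈ Ω, (x.2 = a₂ ∨ x.2 = b₂) → (A x).2 = 0)
    (hBbc1 : ∀ x ∈ Ω, (x.1 = a₁ ∨ x.1 = b₁) → (B x).1 = 0)
    (hBbc2 : ∀ x ∈ Ω, (x.2 = a₂ ∨ x.2 = b₂) → (B x).2 = 0)
    (hCbc1 : ∀ x ∈ Ω, (x.1 = a₁ ∨ x.1 = b₁) → (Cf x).1 = 0)
    (hCbc2 : ∀ x ∈ Ω, (x.2 = a₂ ∨ x.2 = b₂) → (Cf x).2 = 0) :
    ∫ x in Ω, (pn1 x / (γ - 1) + ((wn1 x).1 ^ 2 + (wn1 x).2 ^ 2) / (2 * ρn1 x)) =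
      ∫ x in Ω, (pn x / (γ - 1) + ρn x * kn x) := by
  
  subst hΩ hA hB hC
  set Ω : Set (ℝ × ℝ) := Set.Icc (a₁, a₂) (b₁, b₂) with hΩdef
  have hZA := div_integral_zero a₁ b₁ a₂ b₂ ha.le hb.le _ hAc hAd hAdiv hAbc1 hAbc2
  have hZB := div_integral_zero a₁ b₁ a₂ b₂ ha.le hb.le _ hBc hBd hBdiv hBbc1 hBbc2
  have hZC := div_integral_zero a₁ b₁ a₂ b₂ ha.le hb.le _ hCc hCd hCdiv hCbc1 hCbc2
  have hcomp : IsCompact Ω := isCompact_Icc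
  set A : ℝ × ℝ → ℝ × ℝ := fun x => hn x • pgrad pn1 x
  set B : ℝ × ℝ → ℝ × ℝ := fun x => hn x • wstar x
  set Cf : ℝ × ℝ → ℝ × ℝ := fun x => kn x • wn x + qn x - τu x
  have hK : ContinuousOn (fun x => ((wn1 x).1 ^ 2 + (wn1 x).2 ^ 2) / (2 * ρn1 x)) Ω := by
    apply ContinuousOn.div
    · exact ((hwn1.fst.pow 2).add (hwn1.snd.pow 2))
    · exact continuousOn_const.mul hρn1
    · intro x hx
      have := hρn1pos x hx
      positivity
  have I1 : IntegrableOn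
      (fun x => pn1 x / (γ - 1) + ((wn1 x).1 ^ 2 + (wn1 x).2 ^ 2) / (2 * ρn1 x)) Ω :=
    ((hpn1.div_const _).add hK).integrableOn_compact hcomp
  have I2 : IntegrableOn (fun x => pn x / (γ - 1) + ρn x * kn x) Ω :=
    ((hpn.div_const _).add (hρn.mul hkn)).integrableOn_compact hcomp
  have I3 : IntegrableOn
      (fun x => Δt ^ 2 * pdiv A x - Δt * pdiv Cf x - Δt * pdiv B x) Ω :=
    ((hAdiv.const_mul _).sub (hCdiv.const_mul _)).sub (hBdiv.const_mul _)
  have hpt : Set.EqOn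
      (fun x => pn1 x / (γ - 1) + ((wn1 x).1 ^ 2 + (wn1 x).2 ^ 2) / (2 * ρn1 x))
      (fun x => (pn x / (γ - 1) + ρn x * kn x) +
        (Δt ^ 2 * pdiv A x - Δt * pdiv Cf x - Δt * pdiv B x)) Ω := by
    intro x hx
    have h := heq x hx
    dsimp only
    linarith
  calc ∫ x in Ω, (pn1 x / (γ - 1) + ((wn1 x).1 ^ 2 + (wn1 x).2 ^ 2) / (2 * ρn1 x))
      = ∫ x in Ω, ((pn x / (γ - 1) + ρn x * kn x) +
          (Δt ^ 2 * pdiv A x - Δt * pdiv Cf x - Δt * pdiv B x)) :=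
        setIntegral_congr_fun measurableSet_Icc hpt
    _ = (∫ x in Ω, (pn x / (γ - 1) + ρn x * kn x)) +
          ∫ x in Ω, (Δt ^ 2 * pdiv A x - Δt * pdiv Cf x - Δt * pdiv B x) :=
        integral_add I2 I3
    _ = ∫ x in Ω, (pn x / (γ - 1) + ρn x * kn x) := by
        have IA : IntegrableOn (fun x => Δt ^ 2 * pdiv A x) Ω := hAdiv.const_mul _
        have IC : IntegrableOn (fun x => Δt * pdiv Cf x) Ω := hCdiv.const_mul _
        have IB : IntegrableOn (fun x => Δt * pdiv B x) Ω := hBdiv.const_mul _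
        have IAC : IntegrableOn (fun x => Δt ^ 2 * pdiv A x - Δt * pdiv Cf x) Ω := IA.sub IC
        rw [integral_sub (f := fun x => Δt ^ 2 * pdiv A x - Δt * pdiv Cf x)
              (g := fun x => Δt * pdiv B x) IAC IB,
            integral_sub (f := fun x => Δt ^ 2 * pdiv A x)
              (g := fun x => Δt * pdiv Cf x) IA IC,
            integral_const_mul, integral_const_mul, integral_const_mul, hZA, hZB, hZC]
        ring
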